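/- Let R_0, R_1, R_2, C_1, C_2, Q, β be strictly positive real numbers, and let t_s be a real number satisfying 0 < t_s ≤ min{R_1 C_1, R_2 C_2} and t_s ≤ R_0 / (1/C_1 + 1/C_2 + β/Q). Define g : ℕ → ℝ by g(0) = R_0 and, for t ≥ 1, g(t) = (t_s/C_1)(1 − t_s/(R_1 C_1))^{t−1} + (t_s/C_2)(1 − t_s/(R_2 C_2))^{t−1} + t_s β / Q. Then g is decreasing: g(t) ≥ g(t+1) for all t ∈ ℕ. -/
import Mathlib


/-- The impulse response of the forward-Euler discretized two-time-constant
equivalent-circuit battery model: `g(0) = R₀` and for `t ≥ 1`,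
`g(t) = (t_s/C₁)(1 − t_s/(R₁C₁))^{t−1} + (t_s/C₂)(1 − t_s/(R₂C₂))^{t−1} + t_s β/Q`. -/
noncomputable def ecmImpulse (R0 R1 R2 C1 C2 Q β ts : ℝ) : ℕ → ℝ
  | 0 => R0
  | t + 1 => (ts / C1) * (1 - ts / (R1 * C1)) ^ t
      + (ts / C2) * (1 - ts / (R2 * C2)) ^ t + ts * β / Q

/-- If `0 < t_s ≤ min{R₁C₁, R₂C₂}` and `t_s ≤ R₀/(1/C₁ + 1/C₂ + β/Q)`, then the
impulse response of the discretized equivalent-circuit model is decreasing. -/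
theorem ecmImpulse_decreasing (R0 R1 R2 C1 C2 Q β ts : ℝ)
    (hR0 : 0 < R0) (hR1 : 0 < R1) (hR2 : 0 < R2)
    (hC1 : 0 < C1) (hC2 : 0 < C2) (hQ : 0 < Q) (hβ : 0 < β)
    (hts : 0 < ts)
    (hts1 : ts ≤ min (R1 * C1) (R2 * C2))
    (hts2 : ts ≤ R0 / (1 / C1 + 1 / C2 + β / Q)) :
    ∀ t : ℕ, ecmImpulse R0 R1 R2 C1 C2 Q β ts (t + 1) ≤
      ecmImpulse R0 R1 R2 C1 C2 Q β ts t := by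
  have h1 : ts ≤ R1 * C1 := le_trans hts1 (min_le_left _ _)
  have h2 : ts ≤ R2 * C2 := le_trans hts1 (min_le_right _ _)
  have hpos1 : (0:ℝ) < R1 * C1 := mul_pos hR1 hC1
  have hpos2 : (0:ℝ) < R2 * C2 := mul_pos hR2 hC2
  have ha1 : 0 ≤ 1 - ts / (R1 * C1) := by
    rw [sub_nonneg]; exact div_le_one_of_le₀ h1 hpos1.le
  have ha2 : 0 ≤ 1 - ts / (R2 * C2) := by
    rw [sub_nonneg]; exact div_le_one_of_le₀ h2 hpos2.le
  have hb1 : 1 - ts / (R1 * C1) ≤ 1 := by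
    have : 0 < ts / (R1 * C1) := div_pos hts hpos1
    linarith
  have hb2 : 1 - ts / (R2 * C2) ≤ 1 := by
    have : 0 < ts / (R2 * C2) := div_pos hts hpos2
    linarith
  intro t
  cases t with
  | zero =>
    have hsum : (0:ℝ) < 1 / C1 + 1 / C2 + β / Q := by positivity
    have := (le_div_iff₀ hsum).mp hts2
    simp only [ecmImpulse, pow_zero, mul_one]
    have e : ts / C1 + ts / C2 + ts * β / Q = ts * (1 / C1 + 1 / C2 + β / Q) := by
      ring
    linarith [e ▸ this]
  | succ t =>
    simp only [ecmImpulse]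
    have p1 : (1 - ts / (R1 * C1)) ^ (t + 1) ≤ (1 - ts / (R1 * C1)) ^ t :=
      pow_le_pow_of_le_one ha1 hb1 (Nat.le_succ t)
    have p2 : (1 - ts / (R2 * C2)) ^ (t + 1) ≤ (1 - ts / (R2 * C2)) ^ t :=
      pow_le_pow_of_le_one ha2 hb2 (Nat.le_succ t)
    have c1 : 0 ≤ ts / C1 := by positivity
    have c2 : 0 ≤ ts / C2 := by positivity
    have := mul_le_mul_of_nonneg_left p1 c1
    have := mul_le_mul_of_nonneg_left p2 c2
    linarith
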